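/- (Gradient flow formulation.) Let w₋ : Fin p → ℝ, w : Fin n → ℝ and w₊ : Fin q → ℝ be positive weight functions, let B₋ be a real n × p matrix and B₊ a real q × n matrix. Set M := diag(w₋) · B₋ᵀ · diag(w)⁻¹ (a p × n matrix, playing the role of N_{k−1}*) and P := diag(w) · B₊ᵀ · diag(w₊)⁻¹ (an n × q matrix, playing the role of N_k*). Define F : ℝⁿ → ℝ by F(θ) = ∑_i (1/w₋_i) · cos((M·θ)_i) + ∑_j (1/w₊_j) · cos((B₊·θ)_j). Then F is differentiable at every θ, and its differential is the linear map v ↦ −∑_{l} v_l · (1/w_l) · ( B₋ · sin(M·θ) + P · sin(B₊·θ) )_l. Equivalently, the weighted simplicial Kuramoto vector field −B₋ sin(M θ) − P sin(B₊ θ) equals diag(w) times the Euclidean gradient of F, so the weighted simplicial Kuramoto model is the gradient flow of the simplicial order parameter. -/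

import Mathlib

open Matrix

lemma aux_hasFDerivAt {n m : ℕ} (c : Fin m → ℝ) (A : Matrix (Fin m) (Fin n) ℝ)
    (θ : Fin n → ℝ) :
    HasFDerivAt (fun θ : Fin n → ℝ => ∑ i, c i * Real.cos ((A *ᵥ θ) i))
      (∑ i, (c i * (-Real.sin ((A *ᵥ θ) i))) •
        ((ContinuousLinearMap.proj i).comp A.mulVecLin.toContinuousLinearMap)) θ := by
  apply HasFDerivAt.fun_sum
  intro i _
  have hlin : HasFDerivAt (fun θ : Fin n → ℝ => (A *ᵥ θ) i)
      ((ContinuousLinearMap.proj i).comp A.mulVecLin.toContinuousLinearMap) θ := by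
    have := (A.mulVecLin.toContinuousLinearMap).hasFDerivAt (x := θ)
    exact ((ContinuousLinearMap.proj (R := ℝ) (φ := fun _ : Fin m => ℝ) i).hasFDerivAt).comp θ this
  have hcos := (Real.hasDerivAt_cos ((A *ᵥ θ) i)).comp_hasFDerivAt θ hlin
  have := hcos.const_mul (c i)
  refine this.congr_fderiv ?_
  ext v
  simp [smul_smul]

theorem kuramoto_gradient_flow (p n q : ℕ)
    (wm : Fin p → ℝ) (w : Fin n → ℝ) (wp : Fin q → ℝ)
    (hwm : ∀ i, 0 < wm i) (hw : ∀ l, 0 < w l) (hwp : ∀ j, 0 < wp j)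
    (Bm : Matrix (Fin n) (Fin p) ℝ) (Bp : Matrix (Fin q) (Fin n) ℝ) :
    let M : Matrix (Fin p) (Fin n) ℝ := Matrix.diagonal wm * Bmᵀ * (Matrix.diagonal w)⁻¹
    let P : Matrix (Fin n) (Fin q) ℝ := Matrix.diagonal w * Bpᵀ * (Matrix.diagonal wp)⁻¹
    let F : (Fin n → ℝ) → ℝ := fun θ =>
      ∑ i, (1 / wm i) * Real.cos ((M *ᵥ θ) i) + ∑ j, (1 / wp j) * Real.cos ((Bp *ᵥ θ) j)
    ∀ θ : Fin n → ℝ,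
      DifferentiableAt ℝ F θ ∧
      ∀ v : Fin n → ℝ, fderiv ℝ F θ v =
        -∑ l, v l * (1 / w l) *
          ((Bm *ᵥ (fun i => Real.sin ((M *ᵥ θ) i)) +
            P *ᵥ (fun j => Real.sin ((Bp *ᵥ θ) j))) l) := by
  intro M P F θ
  have hF : HasFDerivAt F
      ((∑ i, ((1 / wm i) * (-Real.sin ((M *ᵥ θ) i))) •
        ((ContinuousLinearMap.proj i).comp M.mulVecLin.toContinuousLinearMap)) +
       (∑ j, ((1 / wp j) * (-Real.sin ((Bp *ᵥ θ) j))) •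
        ((ContinuousLinearMap.proj j).comp Bp.mulVecLin.toContinuousLinearMap))) θ :=
    (aux_hasFDerivAt (fun i => 1 / wm i) M θ).add (aux_hasFDerivAt (fun j => 1 / wp j) Bp θ)
  refine ⟨hF.differentiableAt, fun v => ?_⟩
  rw [hF.fderiv]
  have hwm' : ∀ i, wm i ≠ 0 := fun i => (hwm i).ne'
  have hw' : ∀ l, w l ≠ 0 := fun l => (hw l).ne'
  have hwp' : ∀ j, wp j ≠ 0 := fun j => (hwp j).ne'
  have hdw : (Matrix.diagonal w)⁻¹ = Matrix.diagonal (fun l => (w l)⁻¹) := by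
    apply Matrix.inv_eq_right_inv
    rw [Matrix.diagonal_mul_diagonal, ← Matrix.diagonal_one]
    exact congrArg _ (funext fun l => mul_inv_cancel₀ (hw' l))
  have hdwp : (Matrix.diagonal wp)⁻¹ = Matrix.diagonal (fun j => (wp j)⁻¹) := by
    apply Matrix.inv_eq_right_inv
    rw [Matrix.diagonal_mul_diagonal, ← Matrix.diagonal_one]
    exact congrArg _ (funext fun j => mul_inv_cancel₀ (hwp' j))
  have hMent : ∀ i l, M i l = wm i * Bm l i * (w l)⁻¹ := by
    intro i l
    simp [M, hdw, Matrix.mul_diagonal, Matrix.diagonal_mul, Matrix.transpose_apply]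
  have hPent : ∀ l j, P l j = w l * Bp j l * (wp j)⁻¹ := by
    intro l j
    simp [P, hdwp, Matrix.mul_diagonal, Matrix.diagonal_mul, Matrix.transpose_apply]
  simp only [ContinuousLinearMap.add_apply, ContinuousLinearMap.sum_apply,
    ContinuousLinearMap.smul_apply, ContinuousLinearMap.coe_comp', Function.comp_apply,
    ContinuousLinearMap.proj_apply, LinearMap.coe_toContinuousLinearMap',
    Matrix.mulVecLin_apply, smul_eq_mul, Pi.add_apply]
  set s1 : Fin p → ℝ := fun i => Real.sin ((M *ᵥ θ) i) with hs1
  set s2 : Fin q → ℝ := fun j => Real.sin ((Bp *ᵥ θ) j) with hs2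
  have h1 : ∑ i, 1 / wm i * -s1 i * (M *ᵥ v) i
      = ∑ l, -(v l * (1 / w l) * (Bm *ᵥ s1) l) := by
    simp only [Matrix.mulVec, dotProduct, hMent, Finset.mul_sum]
    rw [Finset.sum_comm]
    refine Finset.sum_congr rfl fun l _ => ?_
    rw [← Finset.sum_neg_distrib]
    refine Finset.sum_congr rfl fun i _ => ?_
    field_simp [hwm' i, hw' l]
  have h2 : ∑ j, 1 / wp j * -s2 j * (Bp *ᵥ v) j
      = ∑ l, -(v l * (1 / w l) * (P *ᵥ s2) l) := by
    simp only [Matrix.mulVec, dotProduct, hPent, Finset.mul_sum]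
    rw [Finset.sum_comm]
    refine Finset.sum_congr rfl fun l _ => ?_
    rw [← Finset.sum_neg_distrib]
    refine Finset.sum_congr rfl fun j _ => ?_
    field_simp [hwp' j, hw' l]
  rw [h1, h2, ← Finset.sum_add_distrib, ← Finset.sum_neg_distrib]
  refine Finset.sum_congr rfl fun l _ => ?_
  ring
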